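/- (One-bright-bright-bright soliton.) Let ζ₁ = a₁ + ib₁ with a₁, b₁ ∈ ℝ, b₁ ≠ 0, let c₁, c₂, c₃ be real constants not all zero, and k = c₁² + c₂² + c₃². Define u[1](x,t) = (−i c₁(ζ₁ − ζ₁*)/√k) · exp(−4i(ζ₁ + ζ₁*)[(ζ₁² − ζ₁ζ₁* + (ζ₁*)²)t + x/4]) · sech(4i(ζ₁ − ζ₁*)[(ζ₁² + ζ₁ζ₁* + (ζ₁*)²)t + x/4] + (1/2)ln k), and let v[1], w[1] be given by the same formula with c₁ replaced by c₂ and by c₃ respectively (the sech argument is real, so these functions are smooth and bounded on ℝ²). Then (u[1], v[1], w[1]) is a global smooth solution of the vcmKdV equation. -/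

import Mathlib

open Matrix Filter Topology

noncomputable section

/-- Partial derivative in the first (space) variable. -/
def dX (f : ℝ × ℝ → ℂ) : ℝ × ℝ → ℂ := fun p => deriv (fun x => f (x, p.2)) p.1

/-- Partial derivative in the second (time) variable. -/
def dT (f : ℝ × ℝ → ℂ) : ℝ × ℝ → ℂ := fun p => deriv (fun t => f (p.1, t)) p.2

/-- Left-hand side of one component of the vcmKdV equation
`f_t + f_xxx + 3((q†q) f_x + (q†q_x) f)` for `q = (u,v,w)ᵀ`. -/
def vcmLHS (u v w f : ℝ × ℝ → ℂ) (p : ℝ × ℝ) : ℂ :=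
  dT f p + dX (dX (dX f)) p
    + 3 * (((starRingEnd ℂ) (u p) * u p + (starRingEnd ℂ) (v p) * v p
            + (starRingEnd ℂ) (w p) * w p) * dX f p
         + ((starRingEnd ℂ) (u p) * dX u p + (starRingEnd ℂ) (v p) * dX v p
            + (starRingEnd ℂ) (w p) * dX w p) * f p)

/-- The vector complex modified KdV equation
`q_t + q_xxx + 3(q_x q† q + q q† q_x) = 0` for `q = (u,v,w)ᵀ`. -/
def vcmKdVeq (u v w : ℝ × ℝ → ℂ) : Prop :=
  ∀ p : ℝ × ℝ, vcmLHS u v w u p = 0 ∧ vcmLHS u v w v p = 0 ∧ vcmLHS u v w w p = 0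

/-- `J = diag(1, -1, -1, -1)`. -/
def Jmat : Matrix (Fin 4) (Fin 4) ℂ := Matrix.diagonal ![1, -1, -1, -1]

/-- The potential matrix `Q` built from the entries `u, v, w`. -/
def Qmat (u v w : ℂ) : Matrix (Fin 4) (Fin 4) ℂ :=
  !![0, u, v, w;
     -((starRingEnd ℂ) u), 0, 0, 0;
     -((starRingEnd ℂ) v), 0, 0, 0;
     -((starRingEnd ℂ) w), 0, 0, 0]

/-- `U(ζ) = -iζJ + Q`. -/
def Umat (ζ u v w : ℂ) : Matrix (Fin 4) (Fin 4) ℂ :=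
  (-Complex.I * ζ) • Jmat + Qmat u v w

/-- `V(ζ) = -4iζ³J + 4ζ²Q - 2iζ(Q² + Q_x)J + (-Q_xx + 2Q³ + Q_x Q - Q Q_x)`. -/
def Vmat (ζ u v w ux vx wx uxx vxx wxx : ℂ) : Matrix (Fin 4) (Fin 4) ℂ :=
  (-4 * Complex.I * ζ ^ 3) • Jmat + (4 * ζ ^ 2) • Qmat u v w
    - (2 * Complex.I * ζ) • ((Qmat u v w ^ 2 + Qmat ux vx wx) * Jmat)
    + (-Qmat uxx vxx wxx + 2 * Qmat u v w ^ 3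
        + Qmat ux vx wx * Qmat u v w - Qmat u v w * Qmat ux vx wx)

/-- `U(ζ)` as a matrix-valued field on `ℝ²`. -/
def Ufield (u v w : ℝ × ℝ → ℂ) (ζ : ℂ) (p : ℝ × ℝ) : Matrix (Fin 4) (Fin 4) ℂ :=
  Umat ζ (u p) (v p) (w p)

/-- `V(ζ)` as a matrix-valued field on `ℝ²` (with `Q_x`, `Q_xx` the entrywise derivatives). -/
def Vfield (u v w : ℝ × ℝ → ℂ) (ζ : ℂ) (p : ℝ × ℝ) : Matrix (Fin 4) (Fin 4) ℂ :=
  Vmat ζ (u p) (v p) (w p) (dX u p) (dX v p) (dX w p)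
    (dX (dX u) p) (dX (dX v) p) (dX (dX w) p)

/-- Entrywise `x`-derivative of a matrix-valued field. -/
def dXM (F : ℝ × ℝ → Matrix (Fin 4) (Fin 4) ℂ) (p : ℝ × ℝ) : Matrix (Fin 4) (Fin 4) ℂ :=
  Matrix.of fun i j => deriv (fun x => F (x, p.2) i j) p.1

/-- Entrywise `t`-derivative of a matrix-valued field. -/
def dTM (F : ℝ × ℝ → Matrix (Fin 4) (Fin 4) ℂ) (p : ℝ × ℝ) : Matrix (Fin 4) (Fin 4) ℂ :=
  Matrix.of fun i j => deriv (fun t => F (p.1, t) i j) p.2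

/-- `Ψ` solves the Lax pair `Ψ_x = U(ζ)Ψ`, `Ψ_t = V(ζ)Ψ` with potentials `(u,v,w)`. -/
def SolvesLax (u v w : ℝ × ℝ → ℂ) (ζ : ℂ) (Ψ : ℝ × ℝ → Fin 4 → ℂ) : Prop :=
  ∀ p : ℝ × ℝ,
    HasDerivAt (fun x => Ψ (x, p.2)) ((Ufield u v w ζ p).mulVec (Ψ p)) p.1 ∧
    HasDerivAt (fun t => Ψ (p.1, t)) ((Vfield u v w ζ p).mulVec (Ψ p)) p.2

/-- The rank-one projection `ψψ†/(ψ†ψ)`. -/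
def projOf (ψ : Fin 4 → ℂ) : Matrix (Fin 4) (Fin 4) ℂ :=
  (star ψ ⬝ᵥ ψ)⁻¹ • vecMulVec ψ (star ψ)

/-- One-fold Darboux matrix `T(ζ) = I - ((ζ₁ - ζ₁*)/(ζ - ζ₁*)) ψψ†/(ψ†ψ)`. -/
def Tone (ζ₁ ζ : ℂ) (ψ : Fin 4 → ℂ) : Matrix (Fin 4) (Fin 4) ℂ :=
  1 - ((ζ₁ - (starRingEnd ℂ) ζ₁) / (ζ - (starRingEnd ℂ) ζ₁)) • projOf ψ

/-- Transformed potential `f - 2i(ζ₁ - ζ₁*) Ψ₁⁰ (Ψ₁ʲ)* / (Ψ₁†Ψ₁)` of the one-fold DT. -/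
def u1of (f : ℝ × ℝ → ℂ) (ζ₁ : ℂ) (Ψ₁ : ℝ × ℝ → Fin 4 → ℂ) (j : Fin 4) : ℝ × ℝ → ℂ :=
  fun p => f p - 2 * Complex.I * (ζ₁ - (starRingEnd ℂ) ζ₁) * Ψ₁ p 0
      * (starRingEnd ℂ) (Ψ₁ p j) / (star (Ψ₁ p) ⬝ᵥ Ψ₁ p)

/-- The iterated eigenfunctions `Ψ_i^{(k)}` of the `N`-fold Darboux recursion
(0-based indexing: `PsiIter ζs Ψs k i = Ψ_{i+1}^{(k)}`). -/
def PsiIter (ζs : ℕ → ℂ) (Ψs : ℕ → ℝ × ℝ → Fin 4 → ℂ) : ℕ → ℕ → ℝ × ℝ → Fin 4 → ℂ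
  | 0, i => Ψs i
  | k + 1, i => fun p =>
      (Tone (ζs k) (ζs i) (PsiIter ζs Ψs k k p)).mulVec (PsiIter ζs Ψs k i p)

/-- The product `T_N(ζ) = T[N](ζ) ⋯ T[1](ζ)` of the `N`-fold Darboux recursion. -/
def TNmat (ζs : ℕ → ℂ) (Ψs : ℕ → ℝ × ℝ → Fin 4 → ℂ) :
    ℕ → ℂ → ℝ × ℝ → Matrix (Fin 4) (Fin 4) ℂ
  | 0, _, _ => 1
  | k + 1, ζ, p => Tone (ζs k) ζ (PsiIter ζs Ψs k k p) * TNmat ζs Ψs k ζ p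

/-- The explicit eigenfunction of the Lax pair for the zero seed at eigenvalue `ζk`. -/
def seedPsi (ζk : ℂ) (c₁ c₂ c₃ : ℝ) (p : ℝ × ℝ) : Fin 4 → ℂ :=
  ![Complex.exp (-Complex.I * ζk * (4 * p.2 * ζk ^ 2 + p.1)),
    c₁ * Complex.exp (Complex.I * ζk * (4 * p.2 * ζk ^ 2 + p.1)),
    c₂ * Complex.exp (Complex.I * ζk * (4 * p.2 * ζk ^ 2 + p.1)),
    c₃ * Complex.exp (Complex.I * ζk * (4 * p.2 * ζk ^ 2 + p.1))]

/-- The `N×N` matrix `M` with entries `M_{jk} = Ψ_j†Ψ_k/(ζ_k - ζ_j*)`. -/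
def MmatOf {N : ℕ} (ζs : Fin N → ℂ) (Ψs : Fin N → ℝ × ℝ → Fin 4 → ℂ) (p : ℝ × ℝ) :
    Matrix (Fin N) (Fin N) ℂ :=
  Matrix.of fun j k => (star (Ψs j p) ⬝ᵥ Ψs k p) / (ζs k - (starRingEnd ℂ) (ζs j))

/-- The `4×N` matrix `X = (Ψ₁, …, Ψ_N)` whose columns are the eigenfunctions. -/
def XmatOf {N : ℕ} (Ψs : Fin N → ℝ × ℝ → Fin 4 → ℂ) (p : ℝ × ℝ) :
    Matrix (Fin 4) (Fin N) ℂ :=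
  Matrix.of fun a j => Ψs j p a

/-- `M` bordered on the right by the column `c` and at the bottom by the row `(r, 0)`. -/
def bordered {N : ℕ} (M : Matrix (Fin N) (Fin N) ℂ) (c r : Fin N → ℂ) :
    Matrix (Fin (N + 1)) (Fin (N + 1)) ℂ :=
  Matrix.of fun i j =>
    Fin.lastCases
      (Fin.lastCases (0 : ℂ) (fun j' => r j') j)
      (fun i' => Fin.lastCases (c i') (fun j' => M i' j') j)
      i

namespace OBS

noncomputable def EE (a b : ℝ) (p : ℝ × ℝ) : ℂ :=
  Complex.exp (Complex.I * (-2*a*p.1 - 8*a*(a^2-3*b^2)*p.2))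
noncomputable def th (a b θ0 : ℝ) (p : ℝ × ℝ) : ℝ :=
  -2*b*p.1 - 8*b*(3*a^2-b^2)*p.2 + θ0
noncomputable def CC (a b θ0 : ℝ) (p : ℝ × ℝ) : ℂ := Complex.cosh (th a b θ0 p)
noncomputable def SS (a b θ0 : ℝ) (p : ℝ × ℝ) : ℂ := Complex.sinh (th a b θ0 p)
noncomputable def mu (a : ℝ) : ℂ := -2*a*Complex.I
noncomputable def be (b : ℝ) : ℂ := -2*b
noncomputable def nu (a b : ℝ) : ℂ := -8*a*(a^2-3*b^2)*Complex.I
noncomputable def ta (a b : ℝ) : ℂ := -8*b*(3*a^2-b^2)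
noncomputable def G (a b θ0 : ℝ) (p : ℝ × ℝ) : ℂ := EE a b p * (CC a b θ0 p)⁻¹
noncomputable def G1 (a b θ0 : ℝ) (p : ℝ × ℝ) : ℂ :=
  EE a b p * (mu a * CC a b θ0 p - be b * SS a b θ0 p) * ((CC a b θ0 p)^2)⁻¹
noncomputable def G2 (a b θ0 : ℝ) (p : ℝ × ℝ) : ℂ :=
  EE a b p * ((mu a^2 - be b^2)*(CC a b θ0 p)^2 - 2*mu a*be b*(SS a b θ0 p)*(CC a b θ0 p)
    + 2*be b^2*(SS a b θ0 p)^2) * ((CC a b θ0 p)^3)⁻¹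
noncomputable def G3 (a b θ0 : ℝ) (p : ℝ × ℝ) : ℂ :=
  EE a b p * (mu a^3*(CC a b θ0 p)^3 - 3*mu a*be b^2*(CC a b θ0 p)^3
    - 3*mu a^2*be b*(SS a b θ0 p)*(CC a b θ0 p)^2 + 5*be b^3*(SS a b θ0 p)*(CC a b θ0 p)^2
    + 6*mu a*be b^2*(SS a b θ0 p)^2*(CC a b θ0 p) - 6*be b^3*(SS a b θ0 p)^3) * ((CC a b θ0 p)^4)⁻¹
noncomputable def GT (a b θ0 : ℝ) (p : ℝ × ℝ) : ℂ :=
  EE a b p * (nu a b * CC a b θ0 p - ta a b * SS a b θ0 p) * ((CC a b θ0 p)^2)⁻¹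

lemma CC_ne (a b θ0 : ℝ) (p : ℝ × ℝ) : CC a b θ0 p ≠ 0 := by
  unfold CC; rw [← Complex.ofReal_cosh]; exact_mod_cast (Real.cosh_pos _).ne'

lemma EE_ne (a b : ℝ) (p : ℝ × ℝ) : EE a b p ≠ 0 := Complex.exp_ne_zero _

lemma EE_eq (a b : ℝ) (p : ℝ × ℝ) : EE a b p = Complex.exp (mu a * p.1 + nu a b * p.2) := by
  unfold EE mu nu; congr 1; ring

lemma hasDerivAt_EE_x (a b : ℝ) (p : ℝ × ℝ) :
    HasDerivAt (fun x => EE a b (x, p.2)) (mu a * EE a b p) p.1 := by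
  have h0 : HasDerivAt (fun x : ℝ => (x:ℂ)) 1 p.1 := by
    simpa using (hasDerivAt_id p.1).ofReal_comp
  have h : HasDerivAt (fun x : ℝ => mu a * (x:ℂ) + nu a b * (p.2:ℂ)) (mu a) p.1 := by
    simpa using (h0.const_mul (mu a)).add_const (nu a b * (p.2:ℂ))
  simp only [EE_eq]
  simpa [mul_comm] using h.cexp

lemma hasDerivAt_EE_t (a b : ℝ) (p : ℝ × ℝ) :
    HasDerivAt (fun t => EE a b (p.1, t)) (nu a b * EE a b p) p.2 := by
  have h0 : HasDerivAt (fun t : ℝ => (t:ℂ)) 1 p.2 := by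
    simpa using (hasDerivAt_id p.2).ofReal_comp
  have h : HasDerivAt (fun t : ℝ => mu a * (p.1:ℂ) + nu a b * (t:ℂ)) (nu a b) p.2 := by
    simpa using ((h0.const_mul (nu a b)).const_add (mu a * (p.1:ℂ)))
  simp only [EE_eq]
  simpa [mul_comm] using h.cexp

lemma hasDerivAt_th_x (a b θ0 : ℝ) (p : ℝ × ℝ) :
    HasDerivAt (fun x => th a b θ0 (x, p.2)) (-2*b) p.1 := by
  unfold th
  simpa using (((hasDerivAt_id p.1).const_mul (-2*b)).sub_const
    (8*b*(3*a^2-b^2)*p.2)).add_const θ0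

lemma hasDerivAt_th_t (a b θ0 : ℝ) (p : ℝ × ℝ) :
    HasDerivAt (fun t => th a b θ0 (p.1, t)) (-8*b*(3*a^2-b^2)) p.2 := by
  unfold th
  exact ((((hasDerivAt_id p.2).const_mul (-(8*b*(3*a^2-b^2)))).const_add
    (-2*b*p.1)).add_const θ0 |>.congr_deriv (by ring)).congr_of_eventuallyEq
    (Filter.Eventually.of_forall fun t => by dsimp only [id]; ring)

lemma hasDerivAt_CC_x (a b θ0 : ℝ) (p : ℝ × ℝ) :
    HasDerivAt (fun x => CC a b θ0 (x, p.2)) (be b * SS a b θ0 p) p.1 := by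
  have h1 : HasDerivAt (fun y : ℝ => Complex.cosh (y:ℂ))
      (Complex.sinh ((th a b θ0 p : ℝ) : ℂ)) (th a b θ0 p) :=
    (Complex.hasDerivAt_cosh _).comp_ofReal
  have h2 := h1.scomp p.1 (hasDerivAt_th_x a b θ0 p)
  unfold CC SS be
  refine h2.congr_deriv ?_
  simp [Complex.real_smul]

lemma hasDerivAt_SS_x (a b θ0 : ℝ) (p : ℝ × ℝ) :
    HasDerivAt (fun x => SS a b θ0 (x, p.2)) (be b * CC a b θ0 p) p.1 := by
  have h1 : HasDerivAt (fun y : ℝ => Complex.sinh (y:ℂ))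
      (Complex.cosh ((th a b θ0 p : ℝ) : ℂ)) (th a b θ0 p) :=
    (Complex.hasDerivAt_sinh _).comp_ofReal
  have h2 := h1.scomp p.1 (hasDerivAt_th_x a b θ0 p)
  unfold SS CC be
  refine h2.congr_deriv ?_
  simp [Complex.real_smul]

lemma hasDerivAt_CC_t (a b θ0 : ℝ) (p : ℝ × ℝ) :
    HasDerivAt (fun t => CC a b θ0 (p.1, t)) (ta a b * SS a b θ0 p) p.2 := by
  have h1 : HasDerivAt (fun y : ℝ => Complex.cosh (y:ℂ))
      (Complex.sinh ((th a b θ0 p : ℝ) : ℂ)) (th a b θ0 p) :=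
    (Complex.hasDerivAt_cosh _).comp_ofReal
  have h2 := h1.scomp p.2 (hasDerivAt_th_t a b θ0 p)
  unfold CC SS ta
  refine h2.congr_deriv ?_
  simp [Complex.real_smul]

lemma hasDerivAt_SS_t (a b θ0 : ℝ) (p : ℝ × ℝ) :
    HasDerivAt (fun t => SS a b θ0 (p.1, t)) (ta a b * CC a b θ0 p) p.2 := by
  have h1 : HasDerivAt (fun y : ℝ => Complex.sinh (y:ℂ))
      (Complex.cosh ((th a b θ0 p : ℝ) : ℂ)) (th a b θ0 p) :=
    (Complex.hasDerivAt_sinh _).comp_ofReal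
  have h2 := h1.scomp p.2 (hasDerivAt_th_t a b θ0 p)
  unfold SS CC ta
  refine h2.congr_deriv ?_
  simp [Complex.real_smul]

lemma cinv {f : ℝ → ℂ} {f' : ℂ} {x : ℝ} (hf : HasDerivAt f f' x) (hx : f x ≠ 0) :
    HasDerivAt (fun y => (f y)⁻¹) (-f' / f x ^ 2) x := by
  have h := (hasDerivAt_inv hx).scomp x hf
  refine h.congr_deriv ?_
  simp only [smul_eq_mul]
  field_simp

lemma cpow {f : ℝ → ℂ} {f' : ℂ} {x : ℝ} (hf : HasDerivAt f f' x) (n : ℕ) :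
    HasDerivAt (fun y => (f y)^n) (n * f x ^ (n-1) * f') x := by
  have h := (hasDerivAt_pow n (f x)).scomp x hf
  refine h.congr_deriv ?_
  simp [smul_eq_mul]
  ring

lemma hasDerivAt_G_x (a b θ0 : ℝ) (p : ℝ × ℝ) :
    HasDerivAt (fun x => G a b θ0 (x, p.2)) (G1 a b θ0 p) p.1 := by
  have hC := hasDerivAt_CC_x a b θ0 p
  have hCi : HasDerivAt (fun x => (CC a b θ0 (x, p.2))⁻¹)
      (-(be b * SS a b θ0 p) / (CC a b θ0 p)^2) p.1 := cinv hC (CC_ne a b θ0 p)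
  have h := (hasDerivAt_EE_x a b p).mul hCi
  unfold G
  refine h.congr_deriv ?_
  unfold G1
  field_simp [CC_ne a b θ0 p]
  ring

lemma hasDerivAt_G1_x (a b θ0 : ℝ) (p : ℝ × ℝ) :
    HasDerivAt (fun x => G1 a b θ0 (x, p.2)) (G2 a b θ0 p) p.1 := by
  have hC := hasDerivAt_CC_x a b θ0 p
  have hS := hasDerivAt_SS_x a b θ0 p
  have hC2 : HasDerivAt (fun x => (CC a b θ0 (x, p.2))^2)
      ((2:ℕ) * (CC a b θ0 p)^1 * (be b * SS a b θ0 p)) p.1 := cpow hC 2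
  have hC2i : HasDerivAt (fun x => ((CC a b θ0 (x, p.2))^2)⁻¹)
      (-((2:ℕ) * (CC a b θ0 p)^1 * (be b * SS a b θ0 p)) / ((CC a b θ0 p)^2)^2) p.1 :=
    cinv hC2 (pow_ne_zero 2 (CC_ne a b θ0 p))
  have h := ((hasDerivAt_EE_x a b p).mul
      ((hC.const_mul (mu a)).sub (hS.const_mul (be b)))).mul hC2i
  unfold G1
  refine h.congr_deriv ?_
  unfold G2
  simp only [Pi.mul_apply, Pi.sub_apply, Pi.add_apply]
  field_simp [CC_ne a b θ0 p]
  ring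

lemma hasDerivAt_G2_x (a b θ0 : ℝ) (p : ℝ × ℝ) :
    HasDerivAt (fun x => G2 a b θ0 (x, p.2)) (G3 a b θ0 p) p.1 := by
  have hC := hasDerivAt_CC_x a b θ0 p
  have hS := hasDerivAt_SS_x a b θ0 p
  have hC2 : HasDerivAt (fun x => (CC a b θ0 (x, p.2))^2)
      ((2:ℕ) * (CC a b θ0 p)^1 * (be b * SS a b θ0 p)) p.1 := cpow hC 2
  have hS2 : HasDerivAt (fun x => (SS a b θ0 (x, p.2))^2)
      ((2:ℕ) * (SS a b θ0 p)^1 * (be b * CC a b θ0 p)) p.1 := cpow hS 2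
  have hC3 : HasDerivAt (fun x => (CC a b θ0 (x, p.2))^3)
      ((3:ℕ) * (CC a b θ0 p)^2 * (be b * SS a b θ0 p)) p.1 := cpow hC 3
  have hC3i : HasDerivAt (fun x => ((CC a b θ0 (x, p.2))^3)⁻¹)
      (-((3:ℕ) * (CC a b θ0 p)^2 * (be b * SS a b θ0 p)) / ((CC a b θ0 p)^3)^2) p.1 :=
    cinv hC3 (pow_ne_zero 3 (CC_ne a b θ0 p))
  have h := ((hasDerivAt_EE_x a b p).mul
      (((hC2.const_mul (mu a^2 - be b^2)).sub
        ((hS.mul hC).const_mul (2*mu a*be b))).add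
        (hS2.const_mul (2*be b^2)))).mul hC3i
  unfold G2
  have hfun : (fun x => EE a b (x, p.2) *
      ((mu a^2 - be b^2)*(CC a b θ0 (x, p.2))^2
        - 2*mu a*be b*(SS a b θ0 (x, p.2))*(CC a b θ0 (x, p.2))
        + 2*be b^2*(SS a b θ0 (x, p.2))^2) * ((CC a b θ0 (x, p.2))^3)⁻¹)
      = fun x => EE a b (x, p.2) *
      ((mu a^2 - be b^2)*(CC a b θ0 (x, p.2))^2
        - 2*mu a*be b*(SS a b θ0 (x, p.2)*CC a b θ0 (x, p.2))
        + 2*be b^2*(SS a b θ0 (x, p.2))^2) * ((CC a b θ0 (x, p.2))^3)⁻¹ := by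
    funext x; ring
  rw [hfun]
  refine h.congr_deriv ?_
  unfold G3
  simp only [Pi.mul_apply, Pi.sub_apply, Pi.add_apply]
  field_simp [CC_ne a b θ0 p]
  ring

lemma hasDerivAt_G_t (a b θ0 : ℝ) (p : ℝ × ℝ) :
    HasDerivAt (fun t => G a b θ0 (p.1, t)) (GT a b θ0 p) p.2 := by
  have hC := hasDerivAt_CC_t a b θ0 p
  have hCi : HasDerivAt (fun t => (CC a b θ0 (p.1, t))⁻¹)
      (-(ta a b * SS a b θ0 p) / (CC a b θ0 p)^2) p.2 := cinv hC (CC_ne a b θ0 p)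
  have h := (hasDerivAt_EE_t a b p).mul hCi
  unfold G
  refine h.congr_deriv ?_
  unfold GT
  field_simp [CC_ne a b θ0 p]
  ring
lemma conj_EE (a b : ℝ) (p : ℝ × ℝ) : (starRingEnd ℂ) (EE a b p) = (EE a b p)⁻¹ := by
  unfold EE
  rw [← Complex.exp_conj, ← Complex.exp_neg]
  congr 1
  simp [_root_.map_mul, map_sub, map_ofNat, Complex.conj_I, Complex.conj_ofReal]

lemma conj_CC (a b θ0 : ℝ) (p : ℝ × ℝ) :
    (starRingEnd ℂ) (CC a b θ0 p) = CC a b θ0 p := by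
  unfold CC; rw [← Complex.ofReal_cosh, Complex.conj_ofReal]

lemma conj_G_mul_G (a b θ0 : ℝ) (p : ℝ × ℝ) :
    (starRingEnd ℂ) (G a b θ0 p) * G a b θ0 p = ((CC a b θ0 p)^2)⁻¹ := by
  unfold G
  rw [_root_.map_mul, map_inv₀, conj_EE, conj_CC]
  field_simp [EE_ne a b p, CC_ne a b θ0 p]

lemma conj_G_mul_G1 (a b θ0 : ℝ) (p : ℝ × ℝ) :
    (starRingEnd ℂ) (G a b θ0 p) * G1 a b θ0 p
      = (mu a * CC a b θ0 p - be b * SS a b θ0 p) * ((CC a b θ0 p)^3)⁻¹ := by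
  unfold G G1
  rw [_root_.map_mul, map_inv₀, conj_EE, conj_CC]
  field_simp [EE_ne a b p, CC_ne a b θ0 p]

lemma key' (a b : ℝ) (c s : ℂ) (hcs : c^2 - s^2 = 1) :
    (nu a b * c - ta a b * s)*c^2
    + (mu a^3*c^3 - 3*mu a*be b^2*c^3 - 3*mu a^2*be b*s*c^2 + 5*be b^3*s*c^2
       + 6*mu a*be b^2*s^2*c - 6*be b^3*s^3)
    + 24*(b:ℂ)^2*(mu a * c - be b * s) = 0 := by
  unfold mu be nu ta
  linear_combination (24*(a:ℂ)^2*b*c^2*s - 8*(a:ℂ)^3*c^3*Complex.I) * Complex.I_sq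
    + (-48*(b:ℂ)^3*s + 48*(a:ℂ)*b^2*c*Complex.I) * hcs

lemma key (a b θ0 : ℝ) (p : ℝ × ℝ) :
    GT a b θ0 p + G3 a b θ0 p
      + 12*(b:ℂ)^2 * (((CC a b θ0 p)^2)⁻¹ * G1 a b θ0 p
        + (mu a * CC a b θ0 p - be b * SS a b θ0 p) * ((CC a b θ0 p)^3)⁻¹ * G a b θ0 p)
      = 0 := by
  have hcs : (CC a b θ0 p)^2 - (SS a b θ0 p)^2 = 1 := by
    unfold CC SS; exact Complex.cosh_sq_sub_sinh_sq _
  have h := key' a b (CC a b θ0 p) (SS a b θ0 p) hcs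
  have expand : GT a b θ0 p + G3 a b θ0 p
      + 12*(b:ℂ)^2 * (((CC a b θ0 p)^2)⁻¹ * G1 a b θ0 p
        + (mu a * CC a b θ0 p - be b * SS a b θ0 p) * ((CC a b θ0 p)^3)⁻¹ * G a b θ0 p)
      = EE a b p * ((nu a b * CC a b θ0 p - ta a b * SS a b θ0 p)*(CC a b θ0 p)^2
        + (mu a^3*(CC a b θ0 p)^3 - 3*mu a*be b^2*(CC a b θ0 p)^3
          - 3*mu a^2*be b*(SS a b θ0 p)*(CC a b θ0 p)^2
          + 5*be b^3*(SS a b θ0 p)*(CC a b θ0 p)^2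
          + 6*mu a*be b^2*(SS a b θ0 p)^2*(CC a b θ0 p) - 6*be b^3*(SS a b θ0 p)^3)
        + 24*(b:ℂ)^2*(mu a * CC a b θ0 p - be b * SS a b θ0 p)) * ((CC a b θ0 p)^4)⁻¹ := by
    unfold GT G3 G1 G
    field_simp [CC_ne a b θ0 p]
    ring
  rw [expand, h, mul_zero, zero_mul]
end OBS

namespace OBS

lemma G_contDiff (a b θ0 : ℝ) : ContDiff ℝ (⊤:ℕ∞) (G a b θ0) := by
  have h1 : ContDiff ℝ (⊤:ℕ∞) (fun p : ℝ × ℝ => (p.1 : ℂ)) :=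
    Complex.ofRealCLM.contDiff.comp contDiff_fst
  have h2 : ContDiff ℝ (⊤:ℕ∞) (fun p : ℝ × ℝ => (p.2 : ℂ)) :=
    Complex.ofRealCLM.contDiff.comp contDiff_snd
  have hth : ContDiff ℝ (⊤:ℕ∞) (th a b θ0) := by
    unfold th
    exact ((contDiff_const.mul contDiff_fst).sub (contDiff_const.mul contDiff_snd)).add
      contDiff_const
  have hcosh : ContDiff ℝ (⊤:ℕ∞) Complex.cosh := ContDiff.restrict_scalars ℝ (𝕜' := ℂ) Complex.contDiff_cosh
  have hexp : ContDiff ℝ (⊤:ℕ∞) Complex.exp := ContDiff.restrict_scalars ℝ (𝕜' := ℂ) Complex.contDiff_exp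
  have hCC : ContDiff ℝ (⊤:ℕ∞) (CC a b θ0) := by
    unfold CC
    exact hcosh.comp (Complex.ofRealCLM.contDiff.comp hth)
  have hEE : ContDiff ℝ (⊤:ℕ∞) (EE a b) := by
    unfold EE
    exact hexp.comp
      (contDiff_const.mul ((contDiff_const.mul h1).sub (contDiff_const.mul h2)))
  unfold G
  exact hEE.mul (hCC.inv (CC_ne a b θ0))

theorem master (a b θ0 κ₁ κ₂ κ₃ : ℝ) (hκ : (κ₁:ℂ)^2+(κ₂:ℂ)^2+(κ₃:ℂ)^2 = 4*(b:ℂ)^2)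
    (u v w : ℝ × ℝ → ℂ)
    (hu : u = fun p => (κ₁:ℂ) * G a b θ0 p)
    (hv : v = fun p => (κ₂:ℂ) * G a b θ0 p)
    (hw : w = fun p => (κ₃:ℂ) * G a b θ0 p) :
    ContDiff ℝ (⊤:ℕ∞) u ∧ ContDiff ℝ (⊤:ℕ∞) v ∧ ContDiff ℝ (⊤:ℕ∞) w ∧ vcmKdVeq u v w := by
  subst hu hv hw
  have hGs := G_contDiff a b θ0
  refine ⟨contDiff_const.mul hGs, contDiff_const.mul hGs, contDiff_const.mul hGs, ?_⟩
  have hdX : ∀ κ : ℝ, dX (fun p => (κ:ℂ) * G a b θ0 p) = fun p => (κ:ℂ) * G1 a b θ0 p := by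
    intro κ; funext p
    exact ((hasDerivAt_G_x a b θ0 p).const_mul (κ:ℂ)).deriv
  have hdX1 : ∀ κ : ℝ, dX (fun p => (κ:ℂ) * G1 a b θ0 p) = fun p => (κ:ℂ) * G2 a b θ0 p := by
    intro κ; funext p
    exact ((hasDerivAt_G1_x a b θ0 p).const_mul (κ:ℂ)).deriv
  have hdX2 : ∀ κ : ℝ, dX (fun p => (κ:ℂ) * G2 a b θ0 p) = fun p => (κ:ℂ) * G3 a b θ0 p := by
    intro κ; funext p
    exact ((hasDerivAt_G2_x a b θ0 p).const_mul (κ:ℂ)).deriv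
  have hdT : ∀ κ : ℝ, dT (fun p => (κ:ℂ) * G a b θ0 p) = fun p => (κ:ℂ) * GT a b θ0 p := by
    intro κ; funext p
    exact ((hasDerivAt_G_t a b θ0 p).const_mul (κ:ℂ)).deriv
  intro p
  refine ⟨?_, ?_, ?_⟩
  · simp only [vcmLHS, hdT, hdX, hdX1, hdX2, _root_.map_mul, Complex.conj_ofReal]
    linear_combination (κ₁:ℂ) * key a b θ0 p
      + 3*(κ₁:ℂ)*((κ₁:ℂ)^2+(κ₂:ℂ)^2+(κ₃:ℂ)^2)*G1 a b θ0 p * conj_G_mul_G a b θ0 p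
      + 3*(κ₁:ℂ)*((κ₁:ℂ)^2+(κ₂:ℂ)^2+(κ₃:ℂ)^2)*G a b θ0 p * conj_G_mul_G1 a b θ0 p
      + 3*(κ₁:ℂ)*(((CC a b θ0 p)^2)⁻¹*G1 a b θ0 p
          + (mu a*CC a b θ0 p - be b*SS a b θ0 p)*((CC a b θ0 p)^3)⁻¹*G a b θ0 p) * hκ
  · simp only [vcmLHS, hdT, hdX, hdX1, hdX2, _root_.map_mul, Complex.conj_ofReal]
    linear_combination (κ₂:ℂ) * key a b θ0 p
      + 3*(κ₂:ℂ)*((κ₁:ℂ)^2+(κ₂:ℂ)^2+(κ₃:ℂ)^2)*G1 a b θ0 p * conj_G_mul_G a b θ0 p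
      + 3*(κ₂:ℂ)*((κ₁:ℂ)^2+(κ₂:ℂ)^2+(κ₃:ℂ)^2)*G a b θ0 p * conj_G_mul_G1 a b θ0 p
      + 3*(κ₂:ℂ)*(((CC a b θ0 p)^2)⁻¹*G1 a b θ0 p
          + (mu a*CC a b θ0 p - be b*SS a b θ0 p)*((CC a b θ0 p)^3)⁻¹*G a b θ0 p) * hκ
  · simp only [vcmLHS, hdT, hdX, hdX1, hdX2, _root_.map_mul, Complex.conj_ofReal]
    linear_combination (κ₃:ℂ) * key a b θ0 p
      + 3*(κ₃:ℂ)*((κ₁:ℂ)^2+(κ₂:ℂ)^2+(κ₃:ℂ)^2)*G1 a b θ0 p * conj_G_mul_G a b θ0 p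
      + 3*(κ₃:ℂ)*((κ₁:ℂ)^2+(κ₂:ℂ)^2+(κ₃:ℂ)^2)*G a b θ0 p * conj_G_mul_G1 a b θ0 p
      + 3*(κ₃:ℂ)*(((CC a b θ0 p)^2)⁻¹*G1 a b θ0 p
          + (mu a*CC a b θ0 p - be b*SS a b θ0 p)*((CC a b θ0 p)^3)⁻¹*G a b θ0 p) * hκ

end OBS


/-- the one-bright-bright-bright soliton is a global smooth
solution of the vcmKdV equation. -/
theorem one_bright_soliton_solves (a₁ b₁ : ℝ) (hb : b₁ ≠ 0) (c₁ c₂ c₃ : ℝ)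
    (hc : ¬(c₁ = 0 ∧ c₂ = 0 ∧ c₃ = 0))
    (k : ℝ) (hk : k = c₁ ^ 2 + c₂ ^ 2 + c₃ ^ 2)
    (ζ₁ : ℂ) (hζ : ζ₁ = (a₁ : ℂ) + (b₁ : ℂ) * Complex.I)
    (u1 v1 w1 : ℝ × ℝ → ℂ)
    (hu1 : u1 = fun p => -Complex.I * c₁ * (ζ₁ - (starRingEnd ℂ) ζ₁) / (Real.sqrt k : ℂ)
      * Complex.exp (-4 * Complex.I * (ζ₁ + (starRingEnd ℂ) ζ₁)
          * ((ζ₁ ^ 2 - ζ₁ * (starRingEnd ℂ) ζ₁ + ((starRingEnd ℂ) ζ₁) ^ 2) * p.2 + p.1 / 4))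
      * (Complex.cosh (4 * Complex.I * (ζ₁ - (starRingEnd ℂ) ζ₁)
          * ((ζ₁ ^ 2 + ζ₁ * (starRingEnd ℂ) ζ₁ + ((starRingEnd ℂ) ζ₁) ^ 2) * p.2 + p.1 / 4)
          + (Real.log k : ℂ) / 2))⁻¹)
    (hv1 : v1 = fun p => -Complex.I * c₂ * (ζ₁ - (starRingEnd ℂ) ζ₁) / (Real.sqrt k : ℂ)
      * Complex.exp (-4 * Complex.I * (ζ₁ + (starRingEnd ℂ) ζ₁)
          * ((ζ₁ ^ 2 - ζ₁ * (starRingEnd ℂ) ζ₁ + ((starRingEnd ℂ) ζ₁) ^ 2) * p.2 + p.1 / 4))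
      * (Complex.cosh (4 * Complex.I * (ζ₁ - (starRingEnd ℂ) ζ₁)
          * ((ζ₁ ^ 2 + ζ₁ * (starRingEnd ℂ) ζ₁ + ((starRingEnd ℂ) ζ₁) ^ 2) * p.2 + p.1 / 4)
          + (Real.log k : ℂ) / 2))⁻¹)
    (hw1 : w1 = fun p => -Complex.I * c₃ * (ζ₁ - (starRingEnd ℂ) ζ₁) / (Real.sqrt k : ℂ)
      * Complex.exp (-4 * Complex.I * (ζ₁ + (starRingEnd ℂ) ζ₁)
          * ((ζ₁ ^ 2 - ζ₁ * (starRingEnd ℂ) ζ₁ + ((starRingEnd ℂ) ζ₁) ^ 2) * p.2 + p.1 / 4))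
      * (Complex.cosh (4 * Complex.I * (ζ₁ - (starRingEnd ℂ) ζ₁)
          * ((ζ₁ ^ 2 + ζ₁ * (starRingEnd ℂ) ζ₁ + ((starRingEnd ℂ) ζ₁) ^ 2) * p.2 + p.1 / 4)
          + (Real.log k : ℂ) / 2))⁻¹) :
    ContDiff ℝ (⊤ : ℕ∞) u1 ∧ ContDiff ℝ (⊤ : ℕ∞) v1 ∧ ContDiff ℝ (⊤ : ℕ∞) w1 ∧
    vcmKdVeq u1 v1 w1 := by
  subst hζ
  have hkpos : 0 < k := by
    have hne : c₁ ≠ 0 ∨ c₂ ≠ 0 ∨ c₃ ≠ 0 := by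
      by_contra h; push_neg at h; exact hc ⟨h.1, h.2.1, h.2.2⟩
    rw [hk]
    rcases hne with h | h | h <;>
      nlinarith [sq_nonneg c₁, sq_nonneg c₂, sq_nonneg c₃, pow_two_pos_of_ne_zero h]
  have hsne : Real.sqrt k ≠ 0 := (Real.sqrt_pos.mpr hkpos).ne'
  have hs : Real.sqrt k ^ 2 = k := Real.sq_sqrt hkpos.le
  have hκre : (2*b₁*c₁/Real.sqrt k)^2 + (2*b₁*c₂/Real.sqrt k)^2 + (2*b₁*c₃/Real.sqrt k)^2
      = 4*b₁^2 := by
    rw [div_pow, div_pow, div_pow, hs, ← add_div, ← add_div,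
      div_eq_iff hkpos.ne', hk]
    ring
  have hκC : ((2*b₁*c₁/Real.sqrt k : ℝ):ℂ)^2 + ((2*b₁*c₂/Real.sqrt k : ℝ):ℂ)^2
      + ((2*b₁*c₃/Real.sqrt k : ℝ):ℂ)^2 = 4*(b₁:ℂ)^2 := by
    exact_mod_cast congrArg (Complex.ofReal) hκre
  have hconj : (starRingEnd ℂ) ((a₁:ℂ) + (b₁:ℂ)*Complex.I) = (a₁:ℂ) - (b₁:ℂ)*Complex.I := by
    simp [map_add, _root_.map_mul, Complex.conj_ofReal, Complex.conj_I]
    ring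
  have hfun : ∀ c : ℝ,
      (fun p : ℝ × ℝ => -Complex.I * c * (((a₁:ℂ) + (b₁:ℂ) * Complex.I)
          - (starRingEnd ℂ) ((a₁:ℂ) + (b₁:ℂ) * Complex.I)) / (Real.sqrt k : ℂ)
        * Complex.exp (-4 * Complex.I * (((a₁:ℂ) + (b₁:ℂ) * Complex.I)
            + (starRingEnd ℂ) ((a₁:ℂ) + (b₁:ℂ) * Complex.I))
          * ((((a₁:ℂ) + (b₁:ℂ) * Complex.I) ^ 2
              - ((a₁:ℂ) + (b₁:ℂ) * Complex.I) * (starRingEnd ℂ) ((a₁:ℂ) + (b₁:ℂ) * Complex.I)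
              + ((starRingEnd ℂ) ((a₁:ℂ) + (b₁:ℂ) * Complex.I)) ^ 2) * p.2 + p.1 / 4))
        * (Complex.cosh (4 * Complex.I * (((a₁:ℂ) + (b₁:ℂ) * Complex.I)
            - (starRingEnd ℂ) ((a₁:ℂ) + (b₁:ℂ) * Complex.I))
          * ((((a₁:ℂ) + (b₁:ℂ) * Complex.I) ^ 2
              + ((a₁:ℂ) + (b₁:ℂ) * Complex.I) * (starRingEnd ℂ) ((a₁:ℂ) + (b₁:ℂ) * Complex.I)
              + ((starRingEnd ℂ) ((a₁:ℂ) + (b₁:ℂ) * Complex.I)) ^ 2) * p.2 + p.1 / 4)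
          + (Real.log k : ℂ) / 2))⁻¹)
      = fun p => ((2*b₁*c/Real.sqrt k : ℝ):ℂ) * OBS.G a₁ b₁ (Real.log k / 2) p := by
    intro c
    funext p
    rw [hconj]
    unfold OBS.G OBS.EE OBS.CC OBS.th
    rw [← mul_assoc]
    congr 1
    · congr 1
      · push_cast
        field_simp
        linear_combination (-2*(b₁:ℂ)*(c:ℂ)*((Real.sqrt k:ℂ))⁻¹) * Complex.I_sq
      · congr 1
        push_cast
        linear_combination (-24*(a₁:ℂ)*(b₁:ℂ)^2*Complex.I*(p.2:ℂ)) * Complex.I_sq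
    · congr 1
      congr 1
      push_cast
      linear_combination (2*(b₁:ℂ)*(p.1:ℂ) + 24*(a₁:ℂ)^2*(b₁:ℂ)*(p.2:ℂ)
        + 8*(b₁:ℂ)^3*(p.2:ℂ)*(Complex.I^2-1)) * Complex.I_sq
  rw [hfun c₁] at hu1
  rw [hfun c₂] at hv1
  rw [hfun c₃] at hw1
  exact OBS.master a₁ b₁ (Real.log k / 2) (2*b₁*c₁/Real.sqrt k) (2*b₁*c₂/Real.sqrt k)
    (2*b₁*c₃/Real.sqrt k) hκC u1 v1 w1 hu1 hv1 hw1

end
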